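/- Let a be a monic real Hurwitz polynomial of degree n and c(s) = s^{n-1} + x₁s^{n-2} + ⋯ + x_{n-1} a monic real polynomial of degree n−1. Then Re[c(iω)/a(iω)] = g(ω²)/|a(iω)|², where g(t) = c₁t^{n-1} + c₂t^{n-2} + ⋯ + c_n with c_l = Σ_{j} (−1)^{l+j} a_j x_{2l−j−1} (conventions a₀ = 1, x₀ = 1, a_i = 0 for i < 0 or i > n, x_i = 0 for i < 0 or i > n−1). -/

import Mathlib

open Polynomial

/-- A real polynomial is Hurwitz stable if all of its complex roots have
negative real part. -/
def Hurwitz (p : Polynomial ℝ) : Prop :=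
  ∀ z : ℂ, (p.map (algebraMap ℝ ℂ)).IsRoot z → z.re < 0

/-- Evaluation of a real polynomial at the purely imaginary number `i ω`. -/
noncomputable def evalI (p : Polynomial ℝ) (ω : ℝ) : ℂ :=
  Polynomial.aeval ((ω : ℂ) * Complex.I) p

/-- `c / q` is strictly positive real. -/
def SPR (c q : Polynomial ℝ) : Prop :=
  c.degree = q.degree ∧ Hurwitz q ∧ ∀ ω : ℝ, 0 < (evalI c ω / evalI q ω).re

/-- The coordinate `x_m` (coefficient of `s^{n-1-m}` in `c`), with the
convention that out-of-range indices give `0` and `x₀ = 1` for monic `c`. -/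
noncomputable def xcoef (n : ℕ) (c : Polynomial ℝ) (m : ℤ) : ℝ :=
  if 0 ≤ m ∧ m ≤ (n : ℤ) - 1 then c.coeff (n - 1 - m.toNat) else 0

lemma Ire_even (s : ℕ) : (Complex.I ^ (2*s)).re = (-1:ℝ)^s := by
  rw [pow_mul, Complex.I_sq, show ((-1:ℂ))^s = (((-1:ℝ)^s : ℝ) : ℂ) by push_cast; ring,
    Complex.ofReal_re]

lemma Ire_odd (t : ℕ) (h : t % 2 = 1) : (Complex.I ^ t).re = 0 := by
  obtain ⟨s, rfl⟩ : ∃ s, t = 2*s + 1 := ⟨t/2, by omega⟩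
  have h2 : Complex.I ^ (2*s+1) = (((-1:ℝ)^s : ℝ) : ℂ) * Complex.I := by
    rw [pow_succ, pow_mul, Complex.I_sq]; push_cast; ring
  rw [h2]
  simp only [Complex.mul_re, Complex.I_re, Complex.I_im, Complex.ofReal_re, Complex.ofReal_im]
  ring

lemma neg_one_pow_eq (p q : ℕ) (h : p % 2 = q % 2) : ((-1:ℝ))^p = (-1)^q := by
  rw [← Nat.div_add_mod p 2, ← Nat.div_add_mod q 2, h, pow_add, pow_add, pow_mul, pow_mul]
  norm_num

lemma fixedm (n m : ℕ) (hn : 1 ≤ n) (hm : m ≤ n) (a c : Polynomial ℝ) (ω : ℝ) :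
    ∑ k ∈ Finset.range n,
        c.coeff k * a.coeff m * ((-1:ℝ)^m * ω^(k+m) * (Complex.I^(k+m)).re)
    = ∑ l ∈ Finset.Icc 1 n,
        (-1:ℝ)^(l + (n - m)) * a.coeff (n - (n - m)) *
          xcoef n c (2*(l:ℤ) - ((n - m : ℕ):ℤ) - 1) * (ω^2)^(n-l) := by
  rw [← Finset.sum_filter_of_ne (p := fun k => (k + m) % 2 = 0)
      (by intro k _ hne; by_contra hp
          exact hne (by rw [Ire_odd (k+m) (by omega)]; ring)),
    ← Finset.sum_filter_of_ne (s := Finset.Icc 1 n)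
      (p := fun l => n + 1 ≤ 2*l + m ∧ 2*l + m ≤ 2*n)
      (by intro l hl hne; by_contra hp
          refine hne ?_
          have : xcoef n c (2*(l:ℤ) - ((n - m : ℕ):ℤ) - 1) = 0 := by
            rw [xcoef, if_neg]
            push_cast [Nat.cast_sub hm]
            omega
          rw [this]; ring)]
  refine Finset.sum_nbij' (i := fun k => n - (k + m) / 2) (j := fun l => 2*n - 2*l - m)
    ?_ ?_ ?_ ?_ ?_
  · intro k hk
    simp only [Finset.mem_filter, Finset.mem_range, Finset.mem_Icc] at hk ⊢
    omega
  · intro l hl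
    simp only [Finset.mem_filter, Finset.mem_range, Finset.mem_Icc] at hl ⊢
    omega
  · intro k hk
    simp only [Finset.mem_filter, Finset.mem_range] at hk
    omega
  · intro l hl
    simp only [Finset.mem_filter, Finset.mem_Icc] at hl
    omega
  · intro k hk
    simp only [Finset.mem_filter, Finset.mem_range] at hk
    obtain ⟨hkn, hpar⟩ := hk
    obtain ⟨s, hs⟩ : ∃ s, k + m = 2*s := ⟨(k+m)/2, by omega⟩
    have hsn : s ≤ n - 1 := by omega
    have hl : n - (k + m)/2 = n - s := by omega
    rw [hl, hs, Ire_even]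
    have hx : xcoef n c (2*((n - s : ℕ):ℤ) - ((n - m : ℕ):ℤ) - 1) = c.coeff k := by
      rw [xcoef, if_pos]
      · congr 1
        have : (2*((n - s : ℕ):ℤ) - ((n - m : ℕ):ℤ) - 1).toNat = n - 1 - k := by
          push_cast [Nat.cast_sub hm, Nat.cast_sub (show s ≤ n by omega)]
          omega
        rw [this]
        omega
      · push_cast [Nat.cast_sub hm, Nat.cast_sub (show s ≤ n by omega)]
        omega
    rw [hx]
    have hsub : n - (n - s) = s := by omega
    rw [hsub]
    have hpow : (ω^2)^s = ω^(2*s) := by rw [← pow_mul]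
    rw [hpow]
    rw [neg_one_pow_eq ((n - s) + (n - m)) (m + s) (by omega)]
    rw [show a.coeff (n - (n - m)) = a.coeff m by congr 1; omega]
    rw [pow_add]
    ring

theorem stmt_5 (n : ℕ) (hn : 1 ≤ n) (a c : Polynomial ℝ)
    (haM : a.Monic) (had : a.natDegree = n) (haH : Hurwitz a)
    (hcM : c.Monic) (hcd : c.natDegree = n - 1) :
    ∀ ω : ℝ,
      (evalI c ω / evalI a ω).re =
        (∑ l ∈ Finset.Icc 1 n,
            (∑ j ∈ Finset.range (n + 1),
              (-1 : ℝ) ^ (l + j) * a.coeff (n - j) *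
                xcoef n c (2 * (l : ℤ) - (j : ℤ) - 1)) * (ω ^ 2) ^ (n - l))
          / ‖evalI a ω‖ ^ 2 := by
  intro ω
  have hdiv : (evalI c ω / evalI a ω).re =
      (evalI c ω * (starRingEnd ℂ) (evalI a ω)).re / ‖evalI a ω‖ ^ 2 := by
    rw [Complex.div_re, Complex.sq_norm]
    simp [Complex.mul_re]
    ring
  rw [hdiv]
  congr 1
  have hnum : (evalI c ω * (starRingEnd ℂ) (evalI a ω)).re =
      ∑ k ∈ Finset.range n, ∑ m ∈ Finset.range (n+1),
        c.coeff k * a.coeff m * ((-1:ℝ)^m * ω^(k+m) * (Complex.I^(k+m)).re) := by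
    have hc : evalI c ω = ∑ k ∈ Finset.range n, (c.coeff k : ℂ) * ((ω:ℂ) * Complex.I)^k := by
      rw [evalI, Polynomial.aeval_eq_sum_range, hcd, show n - 1 + 1 = n by omega]
      simp [Complex.real_smul]
    have ha : (starRingEnd ℂ) (evalI a ω) =
        ∑ m ∈ Finset.range (n+1), (a.coeff m : ℂ) * (-((ω:ℂ) * Complex.I))^m := by
      rw [evalI, Polynomial.aeval_eq_sum_range, had, map_sum]
      refine Finset.sum_congr rfl fun m _ => ?_
      simp [Complex.real_smul, map_mul, map_pow, Complex.conj_ofReal, Complex.conj_I]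
    rw [hc, ha, Finset.sum_mul_sum, Complex.re_sum]
    refine Finset.sum_congr rfl fun k _ => ?_
    rw [Complex.re_sum]
    refine Finset.sum_congr rfl fun m _ => ?_
    have key : (c.coeff k : ℂ) * ((ω:ℂ) * Complex.I)^k *
        ((a.coeff m : ℂ) * (-((ω:ℂ) * Complex.I))^m) =
        ((c.coeff k * a.coeff m * ((-1:ℝ)^m * ω^(k+m)) : ℝ) : ℂ) * Complex.I^(k+m) := by
      push_cast
      ring
    rw [key, Complex.re_ofReal_mul]
    ring
  rw [hnum, Finset.sum_comm]
  have hR : ∑ l ∈ Finset.Icc 1 n,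
      (∑ j ∈ Finset.range (n + 1),
        (-1 : ℝ) ^ (l + j) * a.coeff (n - j) *
          xcoef n c (2 * (l : ℤ) - (j : ℤ) - 1)) * (ω ^ 2) ^ (n - l)
      = ∑ m ∈ Finset.range (n + 1), ∑ l ∈ Finset.Icc 1 n,
        (-1 : ℝ) ^ (l + (n - m)) * a.coeff (n - (n - m)) *
          xcoef n c (2 * (l : ℤ) - ((n - m : ℕ) : ℤ) - 1) * (ω ^ 2) ^ (n - l) := by
    simp_rw [Finset.sum_mul]
    rw [Finset.sum_comm]
    rw [← Finset.sum_range_reflect]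
    simp only [Nat.add_sub_cancel]
  rw [hR]
  exact Finset.sum_congr rfl fun m hm =>
    fixedm n m hn (by simp only [Finset.mem_range] at hm; omega) a c ω
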